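/- Let G be an undirected graph on vertex set V such that every independent set of G has size at most 2k. If |V| ≥ 6k-1, then G contains a matching of size 2k. -/

import Mathlib

/-- if every independent set of an undirected graph G has size ≤ 2k and
G has at least 6k-1 vertices, then G contains a matching of size 2k. -/
theorem stmt8 (V : Type*) [Fintype V] [DecidableEq V] (k : ℕ) (hk : 1 ≤ k)
    (G : SimpleGraph V)
    (hindep : ∀ I : Finset V, (∀ u ∈ I, ∀ v ∈ I, ¬ G.Adj u v) → I.card ≤ 2*k)
    (hV : 6*k - 1 ≤ Fintype.card V) :
    ∃ M : Finset (V × V), M.card = 2*k ∧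
      (∀ e ∈ M, G.Adj e.1 e.2) ∧
      (∀ e ∈ M, ∀ f ∈ M, e ≠ f →
        e.1 ≠ f.1 ∧ e.1 ≠ f.2 ∧ e.2 ≠ f.1 ∧ e.2 ≠ f.2) := by
  classical
  set good : Finset (V × V) → Prop := fun M =>
    (∀ e ∈ M, G.Adj e.1 e.2) ∧
    (∀ e ∈ M, ∀ f ∈ M, e ≠ f →
      e.1 ≠ f.1 ∧ e.1 ≠ f.2 ∧ e.2 ≠ f.1 ∧ e.2 ≠ f.2) with hgood
  have h0 : good ∅ := ⟨by simp, by simp⟩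
  obtain ⟨M, hMmem, hMmax⟩ := Finset.exists_max_image
    ((Finset.univ : Finset (Finset (V × V))).filter good) Finset.card
    ⟨∅, Finset.mem_filter.mpr ⟨Finset.mem_univ _, h0⟩⟩
  have hMgood : good M := (Finset.mem_filter.mp hMmem).2
  set C : Finset V := M.image Prod.fst ∪ M.image Prod.snd with hC
  have hnotC : ∀ w, w ∉ C → ∀ f ∈ M, w ≠ f.1 ∧ w ≠ f.2 := by
    intro w hw f hf
    constructor
    · intro h
      exact hw (Finset.mem_union_left _ (Finset.mem_image.mpr ⟨f, hf, h.symm⟩))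
    · intro h
      exact hw (Finset.mem_union_right _ (Finset.mem_image.mpr ⟨f, hf, h.symm⟩))
  have hind : ∀ u ∈ (Finset.univ \ C), ∀ v ∈ (Finset.univ \ C), ¬ G.Adj u v := by
    intro u hu v hv hadj
    have hu' : u ∉ C := (Finset.mem_sdiff.mp hu).2
    have hv' : v ∉ C := (Finset.mem_sdiff.mp hv).2
    have hne : ((u, v) : V × V) ∉ M := fun h =>
      hu' (Finset.mem_union_left _ (Finset.mem_image.mpr ⟨(u,v), h, rfl⟩))
    have hgood' : good (insert (u, v) M) := by
      constructor
      · intro e he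
        rcases Finset.mem_insert.mp he with rfl | he
        · exact hadj
        · exact hMgood.1 e he
      · intro e he f hf hef
        rcases Finset.mem_insert.mp he with rfl | he <;>
          rcases Finset.mem_insert.mp hf with h2 | h2
        · exact absurd h2.symm hef
        · obtain ⟨h1, h2'⟩ := hnotC u hu' f h2
          obtain ⟨h3, h4⟩ := hnotC v hv' f h2
          exact ⟨h1, h2', h3, h4⟩
        · subst h2
          obtain ⟨h1, h2'⟩ := hnotC u hu' e he
          obtain ⟨h3, h4⟩ := hnotC v hv' e he
          exact ⟨h1.symm, h3.symm, h2'.symm, h4.symm⟩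
        · exact hMgood.2 e he f h2 hef
    have hle := hMmax _ (Finset.mem_filter.mpr ⟨Finset.mem_univ _, hgood'⟩)
    rw [Finset.card_insert_of_notMem hne] at hle
    omega
  have hI : (Finset.univ \ C).card ≤ 2 * k := hindep _ hind
  have hCcard : C.card ≤ 2 * M.card := by
    calc C.card ≤ (M.image Prod.fst).card + (M.image Prod.snd).card :=
          Finset.card_union_le _ _
      _ ≤ M.card + M.card := add_le_add Finset.card_image_le Finset.card_image_le
      _ = 2 * M.card := by ring
  have hCle : C.card ≤ Fintype.card V := by
    simpa using Finset.card_le_card (Finset.subset_univ C)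
  have hcount : (Finset.univ \ C).card = Fintype.card V - C.card := by
    rw [Finset.card_sdiff_of_subset (Finset.subset_univ _), Finset.card_univ]
  have hM2k : 2 * k ≤ M.card := by omega
  obtain ⟨M', hsub, hcard⟩ := Finset.exists_subset_card_eq hM2k
  exact ⟨M', hcard, fun e he => hMgood.1 e (hsub he),
    fun e he f hf hef => hMgood.2 e (hsub he) f (hsub hf) hef⟩
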